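/- Let α > 1 and let g_s denote the Gamma(α, s) density with shape α and rate s > 0. Then for S' ≥ S > 0, ∫₀^∞ |g_S(u) − g_{S'}(u)| du ≤ 2·[(S'/S)^α − 1]. -/

import Mathlib

open Real MeasureTheory ProbabilityTheory Set

lemma lintegral_gammaPDF_Ioi {a r : ℝ} (ha : 0 < a) (hr : 0 < r) :
    ∫⁻ x in Ioi (0:ℝ), gammaPDF a r x = 1 := by
  rw [Measure.restrict_congr_set Ioi_ae_eq_Ici]
  have leftSide : ∫⁻ x in Iio (0:ℝ), gammaPDF a r x = 0 := by
    rw [setLIntegral_congr_fun measurableSet_Iio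
      (fun x (hx : x < 0) ↦ gammaPDF_of_neg hx), lintegral_zero]
  have := lintegral_gammaPDF_eq_one ha hr
  rwa [← lintegral_add_compl (gammaPDF a r) measurableSet_Ici, compl_Ici, leftSide,
    add_zero] at this

lemma integrable_gammaPDFReal_Ioi {a r : ℝ} (ha : 0 < a) (hr : 0 < r) :
    IntegrableOn (gammaPDFReal a r) (Ioi (0:ℝ)) := by
  have hnn : 0 ≤ᶠ[ae (volume.restrict (Ioi (0:ℝ)))] gammaPDFReal a r :=
    ae_of_all _ (gammaPDFReal_nonneg ha hr)
  refine ⟨(measurable_gammaPDFReal a r).aestronglyMeasurable.restrict, ?_⟩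
  rw [hasFiniteIntegral_iff_ofReal hnn]
  have : ∫⁻ x in Ioi (0:ℝ), ENNReal.ofReal (gammaPDFReal a r x) = 1 :=
    lintegral_gammaPDF_Ioi ha hr
  simp [this]

lemma integral_gammaPDFReal_Ioi {a r : ℝ} (ha : 0 < a) (hr : 0 < r) :
    ∫ x in Ioi (0:ℝ), gammaPDFReal a r x = 1 := by
  rw [integral_eq_lintegral_of_nonneg_ae (ae_of_all _ (gammaPDFReal_nonneg ha hr))
    (measurable_gammaPDFReal a r).aestronglyMeasurable.restrict]
  have : ∫⁻ x in Ioi (0:ℝ), ENNReal.ofReal (gammaPDFReal a r x) = 1 :=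
    lintegral_gammaPDF_Ioi ha hr
  simp [this]

theorem gamma_density_L1_bound (α : ℝ) (hα : 1 < α) (S S' : ℝ)
    (hS : 0 < S) (hSS' : S ≤ S') :
    ∫ u in Set.Ioi (0 : ℝ), |gammaPDFReal α S u - gammaPDFReal α S' u| ≤
      2 * ((S' / S) ^ α - 1) := by
  have hα0 : (0:ℝ) < α := by linarith
  have hS' : 0 < S' := lt_of_lt_of_le hS hSS'
  set c : ℝ := (S' / S) ^ α with hc_def
  have hc1 : 1 ≤ c := Real.one_le_rpow ((one_le_div hS).mpr hSS') hα0.le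
  -- pointwise domination: g' ≤ c * g on Ioi 0
  have hdom : ∀ u ∈ Ioi (0:ℝ), gammaPDFReal α S' u ≤ c * gammaPDFReal α S u := by
    intro u hu
    have hu0 : (0:ℝ) ≤ u := (le_of_lt hu)
    simp only [gammaPDFReal, if_pos hu0]
    have hcS : c * S ^ α = S' ^ α := by
      rw [hc_def, Real.div_rpow hS'.le hS.le, div_mul_cancel₀]
      exact (Real.rpow_pos_of_pos hS α).ne'
    have hexp : Real.exp (-(S' * u)) ≤ Real.exp (-(S * u)) := by
      apply Real.exp_le_exp.mpr
      nlinarith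
    have hΓ : 0 < Real.Gamma α := Real.Gamma_pos_of_pos hα0
    have hxu : (0:ℝ) ≤ u ^ (α - 1) := Real.rpow_nonneg hu0 _
    calc S' ^ α / Real.Gamma α * u ^ (α - 1) * Real.exp (-(S' * u))
        ≤ S' ^ α / Real.Gamma α * u ^ (α - 1) * Real.exp (-(S * u)) := by
          apply mul_le_mul_of_nonneg_left hexp
          positivity
      _ = c * (S ^ α / Real.Gamma α * u ^ (α - 1) * Real.exp (-(S * u))) := by
          rw [← hcS]; ring
  have hg := integrable_gammaPDFReal_Ioi hα0 hS
  have hg' := integrable_gammaPDFReal_Ioi hα0 hS'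
  have hInt1 : IntegrableOn (fun u ↦ gammaPDFReal α S u - gammaPDFReal α S' u)
      (Ioi (0:ℝ)) := hg.sub hg'
  have hInt2 : IntegrableOn (fun u ↦ (gammaPDFReal α S u - gammaPDFReal α S' u)
      + 2 * ((c - 1) * gammaPDFReal α S u)) (Ioi (0:ℝ)) :=
    hInt1.add ((hg.const_mul (c - 1)).const_mul 2)
  have hmono : ∫ u in Ioi (0:ℝ), |gammaPDFReal α S u - gammaPDFReal α S' u| ≤
      ∫ u in Ioi (0:ℝ), ((gammaPDFReal α S u - gammaPDFReal α S' u)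
        + 2 * ((c - 1) * gammaPDFReal α S u)) := by
    apply setIntegral_mono_on hInt1.abs hInt2 measurableSet_Ioi
    intro u hu
    have h1 := hdom u hu
    have h2 : 0 ≤ gammaPDFReal α S u := gammaPDFReal_nonneg hα0 hS u
    rw [abs_sub_le_iff]
    constructor <;> nlinarith
  have hcalc : ∫ u in Ioi (0:ℝ), ((gammaPDFReal α S u - gammaPDFReal α S' u)
      + 2 * ((c - 1) * gammaPDFReal α S u)) = 2 * (c - 1) := by
    rw [integral_add hInt1 ((hg.const_mul (c - 1)).const_mul 2),
      integral_sub hg hg']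
    rw [integral_const_mul, integral_const_mul, integral_gammaPDFReal_Ioi hα0 hS,
      integral_gammaPDFReal_Ioi hα0 hS']
    ring
  calc ∫ u in Ioi (0:ℝ), |gammaPDFReal α S u - gammaPDFReal α S' u|
      ≤ 2 * (c - 1) := hmono.trans_eq hcalc
    _ = 2 * ((S' / S) ^ α - 1) := rfl
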